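/- arXiv:1811.02262 — 3 statements merged into one kernel-verified Lean document; each statement's English description precedes it below -/
import Mathlib

section
/- Let T be the bilateral weighted shift on ℓ²(ℤ) with weight sequence (w_n)_{n∈ℤ} of positive reals. Then T is Cesàro-hypercyclic if and only if there exists a strictly increasing sequence (n_k) of positive integers such that for every integer q, lim_{k→∞} (∏_{i=1}^{n_k} w_{i+q})/n_k = ∞ and lim_{k→∞} (∏_{i=0}^{n_k−1} w_{q−i})/n_k = 0. -/
open Filter Topology

/-- The space `ℓ²(ℤ)` of square-summable complex sequences indexed by `ℤ`. -/
noncomputable abbrev L2Z : Type := lp (fun _ : ℤ => ℂ) 2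

/-- The canonical orthonormal basis vectors of `ℓ²(ℤ)`. -/
noncomputable def eVec (n : ℤ) : L2Z := lp.single 2 n (1 : ℂ)

/-- `T` is the bilateral weighted shift with weight sequence `w`. -/
def IsBilateralWeightedShift (T : L2Z →L[ℂ] L2Z) (w : ℤ → ℝ) : Prop :=
  ∀ n : ℤ, T (eVec n) = (w n : ℂ) • eVec (n - 1)

/-- `T` is hypercyclic. -/
def Hypercyclic (T : L2Z →L[ℂ] L2Z) : Prop :=
  ∃ x : L2Z, Dense {y : L2Z | ∃ n : ℕ, y = (T ^ n) x}

/-- `T` is supercyclic. -/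
def Supercyclic (T : L2Z →L[ℂ] L2Z) : Prop :=
  ∃ x : L2Z, Dense {y : L2Z | ∃ (c : ℂ) (n : ℕ), y = c • (T ^ n) x}

/-- `T` is Cesàro-hypercyclic. -/
def CesaroHypercyclic (T : L2Z →L[ℂ] L2Z) : Prop :=
  ∃ x : L2Z, Dense {y : L2Z | ∃ n : ℕ, 1 ≤ n ∧ y = ((n : ℂ))⁻¹ • (T ^ n) x}

namespace CesaroAux

/-- forward product `∏_{i=1}^n w (i+q)` -/
noncomputable def bprod (w : ℤ → ℝ) (n : ℕ) (q : ℤ) : ℝ := ∏ i ∈ Finset.Icc (1 : ℤ) (n : ℤ), w (i + q)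

/-- backward product `∏_{i=0}^{n-1} w (q-i)` -/
noncomputable def aprod (w : ℤ → ℝ) (n : ℕ) (q : ℤ) : ℝ := ∏ i ∈ Finset.Icc (0 : ℤ) ((n : ℤ) - 1), w (q - i)

variable {w : ℤ → ℝ}

lemma bprod_pos (hw : ∀ n, 0 < w n) (n : ℕ) (q : ℤ) : 0 < bprod w n q :=
  Finset.prod_pos fun _ _ => hw _

lemma aprod_pos (hw : ∀ n, 0 < w n) (n : ℕ) (q : ℤ) : 0 < aprod w n q :=
  Finset.prod_pos fun _ _ => hw _

lemma bprod_zero (q : ℤ) : bprod w 0 q = 1 := by simp [bprod]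

lemma bprod_succ (n : ℕ) (q : ℤ) : bprod w (n + 1) q = bprod w n q * w ((n : ℤ) + 1 + q) := by
  unfold bprod
  push_cast
  have h : Finset.Icc (1:ℤ) ((n:ℤ)+1) = insert ((n:ℤ)+1) (Finset.Icc (1:ℤ) (n:ℤ)) := by
    ext i; simp only [Finset.mem_Icc, Finset.mem_insert]; omega
  rw [h, Finset.prod_insert (by simp only [Finset.mem_Icc]; omega), mul_comm]

/-- the reindexing identity: `∏_{i=1}^n w (i + (q-n)) = ∏_{i=0}^{n-1} w (q-i)` -/
lemma bprod_sub (n : ℕ) (q : ℤ) : bprod w n (q - n) = aprod w n q := by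
  unfold bprod aprod
  refine Finset.prod_nbij' (fun i => (n : ℤ) - i) (fun i => (n : ℤ) - i) ?_ ?_ ?_ ?_ ?_ <;>
    intro i hi <;> simp only [Finset.mem_Icc] at * <;> first
      | omega
      | (congr 1; omega)

lemma aprod_add (n : ℕ) (p : ℤ) : aprod w n (p + n) = bprod w n p := by
  rw [← bprod_sub n (p + n)]; congr 1; omega

end CesaroAux

namespace CesaroAux

/-- The `j`-th coordinate, as a continuous linear functional on `ℓ²(ℤ)`. -/
noncomputable def coord (j : ℤ) : L2Z →L[ℂ] ℂ :=
  LinearMap.mkContinuous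
    { toFun := fun x => x j
      map_add' := fun x y => congrFun (lp.coeFn_add x y) j
      map_smul' := fun c x => congrFun (lp.coeFn_smul c x) j } 1
    (fun x => by
      simpa using lp.norm_apply_le_norm (by norm_num : (2 : ENNReal) ≠ 0) x j)

@[simp] lemma coord_apply (j : ℤ) (x : L2Z) : coord j x = x j := rfl

lemma norm_apply_le (x : L2Z) (j : ℤ) : ‖x j‖ ≤ ‖x‖ :=
  lp.norm_apply_le_norm (by norm_num : (2 : ENNReal) ≠ 0) x j

lemma eVec_apply (p j : ℤ) : eVec p j = if j = p then 1 else 0 := by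
  by_cases h : j = p
  · subst h; simp [eVec, lp.single_apply_self]
  · simp [eVec, lp.single_apply_ne 2 p _ h, h]

lemma norm_eVec (p : ℤ) : ‖eVec p‖ = 1 := by
  have := lp.norm_single (p := 2) (E := fun _ : ℤ => ℂ) (by norm_num) p (1 : ℂ)
  simpa [eVec] using this

lemma eVec_ne_zero (p : ℤ) : eVec p ≠ 0 := by
  intro h
  have := norm_eVec p
  rw [h] at this; simp at this

instance : Nontrivial L2Z := ⟨eVec 0, 0, eVec_ne_zero 0⟩

lemma single_eq_smul_eVec (p : ℤ) (c : ℂ) : lp.single 2 p c = c • eVec p := by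
  have := lp.single_smul (E := fun _ : ℤ => ℂ) 2 p c (1 : ℂ)
  rw [smul_eq_mul, mul_one] at this
  rw [this]; rfl

lemma dense_span_eVec : Dense ((Submodule.span ℂ (Set.range eVec) : Submodule ℂ L2Z) : Set L2Z) := by
  intro x
  refine mem_closure_of_tendsto (lp.hasSum_single (E := fun _ : ℤ => ℂ) ENNReal.ofNat_ne_top x)
    (Eventually.of_forall ?_)
  intro s
  refine Submodule.sum_mem _ fun i _ => ?_
  rw [single_eq_smul_eVec]
  exact Submodule.smul_mem _ _ (Submodule.subset_span ⟨i, rfl⟩)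

variable {w : ℤ → ℝ} {T : L2Z →L[ℂ] L2Z}

lemma T_coord (hT : IsBilateralWeightedShift T w) (x : L2Z) (j : ℤ) :
    (T x) j = (w (j + 1) : ℂ) * x (j + 1) := by
  have key : (coord j).comp T = (w (j + 1) : ℂ) • coord (j + 1) := by
    refine ContinuousLinearMap.ext_on dense_span_eVec ?_
    rintro _ ⟨n, rfl⟩
    simp only [ContinuousLinearMap.comp_apply, ContinuousLinearMap.smul_apply, coord_apply,
      hT n, lp.coeFn_smul, Pi.smul_apply, eVec_apply, smul_eq_mul]
    by_cases h : j = n - 1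
    · rw [if_pos h, if_pos (by omega), h]; ring_nf
    · rw [if_neg h, if_neg (by omega), mul_zero, mul_zero]
  have := congrArg (fun f : L2Z →L[ℂ] ℂ => f x) key
  simpa using this

lemma T_pow_coord (hT : IsBilateralWeightedShift T w) (n : ℕ) (x : L2Z) (j : ℤ) :
    ((T ^ n) x) j = (bprod w n j : ℂ) * x (j + n) := by
  induction n generalizing x with
  | zero => simp [bprod_zero]
  | succ n ih =>
    have h1 : (T ^ (n + 1)) x = (T ^ n) (T x) := by
      rw [pow_succ]; rfl
    rw [h1, ih, T_coord hT, bprod_succ]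
    push_cast
    ring_nf

lemma T_pow_eVec (hT : IsBilateralWeightedShift T w) (n : ℕ) (q : ℤ) :
    (T ^ n) (eVec q) = ((aprod w n q : ℝ) : ℂ) • eVec (q - n) := by
  apply lp.ext
  funext j
  rw [T_pow_coord hT, lp.coeFn_smul]
  simp only [Pi.smul_apply, eVec_apply, smul_eq_mul]
  by_cases h : j + (n : ℤ) = q
  · rw [if_pos h, if_pos (by omega), mul_one, mul_one]
    have : j = q - n := by omega
    subst this
    exact_mod_cast congrArg (fun r : ℝ => ((r : ℝ) : ℂ)) (bprod_sub n q)
  · rw [if_neg h, if_neg (by omega), mul_zero, mul_zero]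

end CesaroAux

namespace CesaroAux

instance : TopologicalSpace.SeparableSpace L2Z := by
  rw [← TopologicalSpace.isSeparable_univ_iff]
  have h1 : TopologicalSpace.IsSeparable (Set.range eVec) :=
    (Set.countable_range _).isSeparable
  have h2 := h1.span (R := ℂ)
  have h3 := h2.closure
  have h4 : closure ((Submodule.span ℂ (Set.range eVec) : Submodule ℂ L2Z) : Set L2Z) =
      Set.univ := dense_span_eVec.closure_eq
  rwa [h4] at h3

variable {w : ℤ → ℝ} {T : L2Z →L[ℂ] L2Z}

/-- Transitivity-type lemma from the weight condition. -/
lemma transitive (hw_pos : ∀ n, 0 < w n) (hT : IsBilateralWeightedShift T w)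
    (nk : ℕ → ℕ) (hpos : ∀ k, 0 < nk k)
    (hcond : ∀ q : ℤ,
      Tendsto (fun k => CesaroAux.bprod w (nk k) q / (nk k : ℝ)) atTop atTop ∧
      Tendsto (fun k => CesaroAux.aprod w (nk k) q / (nk k : ℝ)) atTop (𝓝 0))
    (z y : L2Z) {ε δ : ℝ} (hε : 0 < ε) (hδ : 0 < δ) :
    ∃ n : ℕ, 1 ≤ n ∧ ∃ x : L2Z, ‖x - z‖ < ε ∧ ‖((n : ℂ))⁻¹ • (T ^ n) x - y‖ < δ := by
  -- finite approximations of z and y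
  have hz := lp.hasSum_single (E := fun _ : ℤ => ℂ) ENNReal.ofNat_ne_top z
  have hy := lp.hasSum_single (E := fun _ : ℤ => ℂ) ENNReal.ofNat_ne_top y
  have hz' := Metric.tendsto_nhds.mp hz (ε / 2) (by positivity)
  have hy' := Metric.tendsto_nhds.mp hy (δ / 2) (by positivity)
  obtain ⟨s, hsz, hsy⟩ := (hz'.and hy').exists
  set z' : L2Z := ∑ p ∈ s, lp.single 2 p (z p) with hz'def
  set y' : L2Z := ∑ p ∈ s, lp.single 2 p (y p) with hy'def
  have hzz : ‖z' - z‖ < ε / 2 := by rwa [← dist_eq_norm]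
  have hyy : ‖y' - y‖ < δ / 2 := by rwa [← dist_eq_norm]
  -- the correction vectors
  set u : ℕ → L2Z := fun k =>
    ∑ p ∈ s, ((y p) * (nk k : ℂ) * ((bprod w (nk k) p : ℝ) : ℂ)⁻¹) • eVec (p + nk k) with hu
  -- key algebra: A_{nk k} (z' + u k) = A_{nk k} z' + y'
  have key : ∀ k, ((nk k : ℂ))⁻¹ • (T ^ nk k) (z' + u k)
      = ((nk k : ℂ))⁻¹ • (T ^ nk k) z' + y' := by
    intro k
    have hn0 : ((nk k : ℂ)) ≠ 0 := by
      exact_mod_cast Nat.cast_ne_zero.mpr (hpos k).ne'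
    rw [map_add, smul_add]
    congr 1
    rw [map_sum, Finset.smul_sum]
    rw [hy'def]
    refine Finset.sum_congr rfl fun p hp => ?_
    rw [map_smul, T_pow_eVec hT]
    have hb0 : ((bprod w (nk k) p : ℝ) : ℂ) ≠ 0 := by
      exact_mod_cast (bprod_pos hw_pos (nk k) p).ne'
    have hsh : (aprod w (nk k) (p + nk k) : ℝ) = bprod w (nk k) p := aprod_add _ _
    rw [single_eq_smul_eVec]
    have : p + (nk k : ℤ) - (nk k : ℤ) = p := by omega
    rw [smul_smul, smul_smul, hsh, this]
    congr 1
    field_simp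
  -- norms of the corrections tend to zero
  have hub : Tendsto (fun k => ‖u k‖) atTop (𝓝 0) := by
    have hbd : ∀ k, ‖u k‖ ≤ ∑ p ∈ s, ‖y p‖ * ((nk k : ℝ) / bprod w (nk k) p) := by
      intro k
      refine (norm_sum_le _ _).trans (Finset.sum_le_sum fun p hp => ?_)
      rw [norm_smul, norm_eVec, mul_one]
      have hb := bprod_pos hw_pos (nk k) p
      rw [norm_mul, norm_mul]
      simp only [Complex.norm_natCast, norm_inv, Complex.norm_real]
      rw [Real.norm_eq_abs, abs_of_pos hb]
      rw [mul_assoc, div_eq_mul_inv]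
    have hlim : Tendsto (fun k => ∑ p ∈ s, ‖y p‖ * ((nk k : ℝ) / bprod w (nk k) p))
        atTop (𝓝 0) := by
      have : Tendsto (fun k => ∑ p ∈ s, ‖y p‖ * ((nk k : ℝ) / bprod w (nk k) p))
          atTop (𝓝 (∑ p ∈ s, ‖y p‖ * 0)) := by
        refine tendsto_finset_sum _ fun p hp => Tendsto.const_mul _ ?_
        have h1 := (hcond p).1
        have := h1.inv_tendsto_atTop
        refine this.congr' ?_
        filter_upwards [] with k
        rw [Pi.inv_apply, inv_div]
      simpa using this
    exact squeeze_zero (fun k => norm_nonneg _) hbd hlim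
  have hAz : Tendsto (fun k => ‖((nk k : ℂ))⁻¹ • (T ^ nk k) z'‖) atTop (𝓝 0) := by
    have hbd : ∀ k, ‖((nk k : ℂ))⁻¹ • (T ^ nk k) z'‖
        ≤ ∑ p ∈ s, ‖z p‖ * (aprod w (nk k) p / (nk k : ℝ)) := by
      intro k
      have : (T ^ nk k) z' = ∑ p ∈ s, (z p) • (((aprod w (nk k) p : ℝ) : ℂ) • eVec (p - nk k)) := by
        rw [hz'def, map_sum]
        refine Finset.sum_congr rfl fun p hp => ?_
        rw [single_eq_smul_eVec, map_smul, T_pow_eVec hT]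
      rw [this, Finset.smul_sum]
      refine (norm_sum_le _ _).trans (Finset.sum_le_sum fun p hp => ?_)
      rw [smul_smul, smul_smul, norm_smul, norm_eVec, mul_one, norm_mul, norm_mul]
      simp only [norm_inv, Complex.norm_natCast, Complex.norm_real]
      rw [Real.norm_eq_abs, abs_of_pos (CesaroAux.aprod_pos hw_pos _ _)]
      rw [mul_comm ((nk k : ℝ))⁻¹, mul_assoc, div_eq_mul_inv]
      exact le_of_eq (by ring)
    have hlim : Tendsto (fun k => ∑ p ∈ s, ‖z p‖ * (aprod w (nk k) p / (nk k : ℝ)))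
        atTop (𝓝 0) := by
      have : Tendsto (fun k => ∑ p ∈ s, ‖z p‖ * (aprod w (nk k) p / (nk k : ℝ)))
          atTop (𝓝 (∑ p ∈ s, ‖z p‖ * 0)) :=
        tendsto_finset_sum _ fun p hp => Tendsto.const_mul _ (hcond p).2
      simpa using this
    exact squeeze_zero (fun k => norm_nonneg _) hbd hlim
  -- choose a good k
  have h1 := Metric.tendsto_nhds.mp hub (ε / 2) (by positivity)
  have h2 := Metric.tendsto_nhds.mp hAz (δ / 2) (by positivity)
  obtain ⟨k, hk1, hk2⟩ := (h1.and h2).exists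
  rw [Real.dist_eq, sub_zero, abs_of_nonneg (norm_nonneg _)] at hk1 hk2
  refine ⟨nk k, hpos k, z' + u k, ?_, ?_⟩
  · have habel : z' + u k - z = (z' - z) + u k := by abel
    calc ‖z' + u k - z‖ = ‖(z' - z) + u k‖ := by rw [habel]
    _ ≤ ‖z' - z‖ + ‖u k‖ := norm_add_le _ _
    _ < ε / 2 + ε / 2 := by exact add_lt_add hzz hk1
    _ = ε := by ring
  · rw [key k]
    calc ‖((nk k : ℂ))⁻¹ • (T ^ nk k) z' + y' - y‖
        ≤ ‖((nk k : ℂ))⁻¹ • (T ^ nk k) z'‖ + ‖y' - y‖ := by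
          rw [add_sub_assoc]; exact norm_add_le _ _
    _ < δ / 2 + δ / 2 := add_lt_add hk2 hyy
    _ = δ := by ring

end CesaroAux

namespace CesaroAux

variable {w : ℤ → ℝ} {T : L2Z →L[ℂ] L2Z}

lemma sufficiency (hw_pos : ∀ n, 0 < w n) (hT : IsBilateralWeightedShift T w)
    (nk : ℕ → ℕ) (hpos : ∀ k, 0 < nk k)
    (hcond : ∀ q : ℤ,
      Tendsto (fun k => CesaroAux.bprod w (nk k) q / (nk k : ℝ)) atTop atTop ∧
      Tendsto (fun k => CesaroAux.aprod w (nk k) q / (nk k : ℝ)) atTop (𝓝 0)) :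
    CesaroHypercyclic T := by
  obtain ⟨d, hd⟩ : ∃ d : ℕ → L2Z, DenseRange d :=
    ⟨TopologicalSpace.denseSeq L2Z, TopologicalSpace.denseRange_denseSeq L2Z⟩
  set G : ℕ × ℕ → Set L2Z := fun jm =>
    ⋃ n : ℕ, {x | 1 ≤ n ∧ dist (((n : ℂ))⁻¹ • (T ^ n) x) (d jm.1) < 1 / (jm.2 + 1)} with hG
  have hGo : ∀ jm, IsOpen (G jm) := by
    intro jm
    refine isOpen_iUnion fun n => ?_
    by_cases hn : 1 ≤ n
    · have he : {x | 1 ≤ n ∧ dist (((n : ℂ))⁻¹ • (T ^ n) x) (d jm.1) < 1 / (jm.2 + 1)}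
          = (fun x => ((n : ℂ))⁻¹ • (T ^ n) x) ⁻¹' Metric.ball (d jm.1) (1 / (jm.2 + 1)) := by
        ext x; simp [hn, Metric.mem_ball]
      rw [he]
      exact Metric.isOpen_ball.preimage ((continuous_const_smul ((n : ℂ))⁻¹).comp (T ^ n).continuous)
    · have he : {x : L2Z | 1 ≤ n ∧ dist (((n : ℂ))⁻¹ • (T ^ n) x) (d jm.1) < 1 / (jm.2 + 1)}
          = ∅ := by
        ext x; simp [hn]
      rw [he]; exact isOpen_empty
  have hGd : ∀ jm, Dense (G jm) := by
    intro jm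
    rw [Metric.dense_iff]
    intro z r hr
    have hδ : (0 : ℝ) < 1 / (jm.2 + 1) := by positivity
    obtain ⟨n, hn1, x, hx1, hx2⟩ :=
      transitive hw_pos hT nk hpos hcond z (d jm.1) hr hδ
    refine ⟨x, Metric.mem_ball.mpr (by rwa [dist_eq_norm]), ?_⟩
    exact Set.mem_iUnion.mpr ⟨n, hn1, by rwa [dist_eq_norm]⟩
  have hdense : Dense (⋂ jm, G jm) := dense_iInter_of_isOpen hGo hGd
  obtain ⟨x, hx⟩ := hdense.nonempty
  refine ⟨x, ?_⟩
  rw [Metric.dense_iff]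
  intro t r hr
  obtain ⟨j, hj⟩ := hd.exists_dist_lt t (half_pos hr)
  obtain ⟨m, hm⟩ := exists_nat_one_div_lt (half_pos hr)
  obtain ⟨n, hn1, hnd⟩ := Set.mem_iUnion.mp (Set.mem_iInter.mp hx (j, m))
  refine ⟨((n : ℂ))⁻¹ • (T ^ n) x, Metric.mem_ball.mpr ?_, ⟨n, hn1, rfl⟩⟩
  calc dist (((n : ℂ))⁻¹ • (T ^ n) x) t
      ≤ dist (((n : ℂ))⁻¹ • (T ^ n) x) (d j) + dist (d j) t := dist_triangle _ _ _
    _ < 1 / (m + 1) + r / 2 := by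
        exact add_lt_add hnd (by rwa [dist_comm])
    _ < r / 2 + r / 2 := by exact add_lt_add_left hm _
    _ = r := by ring
end CesaroAux

namespace CesaroAux

variable {w : ℤ → ℝ} {T : L2Z →L[ℂ] L2Z}

lemma orbit_dense_of_orbit_dense (hw_pos : ∀ n, 0 < w n) (hT : IsBilateralWeightedShift T w)
    (x₀ : L2Z) (hx₀ : Dense {y : L2Z | ∃ n : ℕ, 1 ≤ n ∧ y = ((n : ℂ))⁻¹ • (T ^ n) x₀})
    (m : ℕ) (hm : 1 ≤ m) :
    Dense {y : L2Z | ∃ n : ℕ, 1 ≤ n ∧ y = ((n : ℂ))⁻¹ • (T ^ n) (((m : ℂ))⁻¹ • (T ^ m) x₀)} := by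
  set f : L2Z →L[ℂ] L2Z := ((m : ℂ))⁻¹ • (T ^ m) with hf
  have hm0 : ((m : ℂ)) ≠ 0 := Nat.cast_ne_zero.mpr (by omega)
  -- f has dense range
  have hdr : DenseRange f := by
    have hle : Submodule.span ℂ (Set.range eVec) ≤ LinearMap.range (f : L2Z →ₗ[ℂ] L2Z) := by
      rw [Submodule.span_le]
      rintro _ ⟨q, rfl⟩
      have hb0 : ((bprod w m q : ℝ) : ℂ) ≠ 0 := by
        exact_mod_cast (bprod_pos hw_pos m q).ne'
      refine LinearMap.mem_range.mpr ⟨((m : ℂ)) • (((bprod w m q : ℝ) : ℂ))⁻¹ • eVec (q + m), ?_⟩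
      show ((m : ℂ))⁻¹ • (T ^ m) (((m : ℂ)) • (((bprod w m q : ℝ) : ℂ))⁻¹ • eVec (q + m)) = eVec q
      rw [map_smul, map_smul, T_pow_eVec hT]
      have h1 : (aprod w m (q + m) : ℝ) = bprod w m q := aprod_add _ _
      have h2 : q + (m : ℤ) - (m : ℤ) = q := by omega
      rw [h1, h2, smul_smul, smul_smul, smul_smul]
      convert one_smul ℂ (eVec q)
      field_simp
    have hsub : ((Submodule.span ℂ (Set.range eVec) : Submodule ℂ L2Z) : Set L2Z)
        ⊆ Set.range f := by
      intro x hx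
      obtain ⟨v, hv⟩ := LinearMap.mem_range.mp (hle hx)
      exact ⟨v, hv⟩
    exact Dense.mono hsub dense_span_eVec
  -- the commuting identity
  have hcomm : ∀ n : ℕ, ((n : ℂ))⁻¹ • (T ^ n) (f x₀) = f (((n : ℂ))⁻¹ • (T ^ n) x₀) := by
    intro n
    have hTT : (T ^ n) ((T ^ m) x₀) = (T ^ m) ((T ^ n) x₀) := by
      have h1 : (T ^ n) ((T ^ m) x₀) = (T ^ n * T ^ m) x₀ := rfl
      have h2 : (T ^ m) ((T ^ n) x₀) = (T ^ m * T ^ n) x₀ := rfl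
      rw [h1, h2, pow_mul_comm]
    rw [hf]
    simp only [ContinuousLinearMap.smul_apply, map_smul]
    rw [hTT, smul_comm]
  have himg : {y : L2Z | ∃ n : ℕ, 1 ≤ n ∧ y = ((n : ℂ))⁻¹ • (T ^ n) (f x₀)}
      = f '' {y : L2Z | ∃ n : ℕ, 1 ≤ n ∧ y = ((n : ℂ))⁻¹ • (T ^ n) x₀} := by
    ext y
    constructor
    · rintro ⟨n, hn, rfl⟩
      exact ⟨((n : ℂ))⁻¹ • (T ^ n) x₀, ⟨n, hn, rfl⟩, (hcomm n).symm⟩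
    · rintro ⟨z, ⟨n, hn, rfl⟩, rfl⟩
      exact ⟨n, hn, (hcomm n).symm⟩
  have := hdr.dense_image f.continuous hx₀
  rw [← himg] at this
  exact this

end CesaroAux

namespace CesaroAux

variable {w : ℤ → ℝ} {T : L2Z →L[ℂ] L2Z}

lemma selection (hw_pos : ∀ n, 0 < w n) (hT : IsBilateralWeightedShift T w) {x₀ : L2Z}
    (hx₀ : Dense {y : L2Z | ∃ n : ℕ, 1 ≤ n ∧ y = ((n : ℂ))⁻¹ • (T ^ n) x₀})
    (k N : ℕ) :
    ∃ n : ℕ, N < n ∧ 1 ≤ n ∧ ∀ q : ℤ, -(k : ℤ) ≤ q → q ≤ (k : ℤ) →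
      ((k : ℝ) + 1 ≤ bprod w n q / n ∧ aprod w n q / n ≤ 1 / ((k : ℝ) + 1)) := by
  set ε : ℝ := 1 / ((k : ℝ) + 2) with hεdef
  have hk0 : (0 : ℝ) ≤ (k : ℝ) := Nat.cast_nonneg k
  have hε : 0 < ε := by positivity
  have hε1 : ε < 1 := by
    rw [hεdef, div_lt_one (by linarith)]; linarith
  set fk : L2Z := ∑ p ∈ Finset.Icc (-(k : ℤ)) (k : ℤ), eVec p with hfkdef
  have hfk : ∀ j : ℤ, fk j = if -(k : ℤ) ≤ j ∧ j ≤ (k : ℤ) then 1 else 0 := by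
    intro j
    have h1 : fk j = ∑ p ∈ Finset.Icc (-(k : ℤ)) (k : ℤ), (eVec p) j := by
      rw [hfkdef, lp.coeFn_sum, Finset.sum_apply]
    rw [h1]
    simp only [eVec_apply]
    rw [Finset.sum_ite_eq (Finset.Icc (-(k : ℤ)) (k : ℤ)) j (fun _ => (1 : ℂ))]
    simp [Finset.mem_Icc]
  -- pick a Cesàro-hypercyclic vector close to fk
  obtain ⟨v, hvb, hvS⟩ := Metric.dense_iff.mp hx₀ fk ε hε
  obtain ⟨m, hm1, hveq⟩ := hvS
  have hvdense : Dense {y : L2Z | ∃ n : ℕ, 1 ≤ n ∧ y = ((n : ℂ))⁻¹ • (T ^ n) v} := by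
    rw [hveq]
    exact orbit_dense_of_orbit_dense hw_pos hT x₀ hx₀ m hm1
  have hv : ‖v - fk‖ < ε := by
    rw [← dist_eq_norm]; exact Metric.mem_ball.mp hvb
  -- pick a large time n
  set M : ℕ := max N (2 * k + 1) with hMdef
  set F : Set L2Z := (fun n : ℕ => ((n : ℂ))⁻¹ • (T ^ n) v) '' Set.Icc 1 M with hFdef
  have hFfin : F.Finite := (Set.finite_Icc 1 M).image _
  haveI : ∀ x : L2Z, Filter.NeBot (𝓝[≠] x) := fun x => by
    haveI : Filter.NeBot (𝓝[≠] (0 : ℂ)) := NormedField.nhdsNE_neBot 0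
    exact Module.punctured_nhds_neBot ℂ L2Z x
  have hdiff : Dense ({y : L2Z | ∃ n : ℕ, 1 ≤ n ∧ y = ((n : ℂ))⁻¹ • (T ^ n) v} \ F) :=
    hvdense.diff_finite hFfin
  obtain ⟨y, hyb, hyS, hyF⟩ := Metric.dense_iff.mp hdiff fk ε hε
  obtain ⟨n, hn1, hyeq⟩ := hyS
  have hnM : M < n := by
    by_contra h
    push_neg at h
    exact hyF ⟨n, ⟨hn1, h⟩, hyeq.symm⟩
  have hnN : N < n := lt_of_le_of_lt (le_max_left _ _) hnM
  have hnk : 2 * k + 1 < n := lt_of_le_of_lt (le_max_right _ _) hnM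
  have hnkZ : (2 * k + 1 : ℤ) < (n : ℤ) := by exact_mod_cast hnk
  have hn0 : (0 : ℝ) < (n : ℝ) := by
    have : 0 < n := by omega
    exact_mod_cast this
  have hA : ‖((n : ℂ))⁻¹ • (T ^ n) v - fk‖ < ε := by
    rw [← dist_eq_norm, ← hyeq]; exact Metric.mem_ball.mp hyb
  -- coordinatewise bounds
  have hcoordA : ∀ j : ℤ, ‖(((n : ℂ))⁻¹ • (T ^ n) v) j - fk j‖ < ε := by
    intro j
    refine lt_of_le_of_lt ?_ hA
    have h := norm_apply_le (((n : ℂ))⁻¹ • (T ^ n) v - fk) j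
    rwa [lp.coeFn_sub, Pi.sub_apply] at h
  have hcoordv : ∀ j : ℤ, ‖v j - fk j‖ < ε := by
    intro j
    refine lt_of_le_of_lt ?_ hv
    have h := norm_apply_le (v - fk) j
    rwa [lp.coeFn_sub, Pi.sub_apply] at h
  have hAcoord : ∀ j : ℤ, (((n : ℂ))⁻¹ • (T ^ n) v) j
      = ((n : ℂ))⁻¹ * ((bprod w n j : ℝ) : ℂ) * v (j + n) := by
    intro j
    rw [lp.coeFn_smul, Pi.smul_apply, smul_eq_mul, T_pow_coord hT, mul_assoc]
  refine ⟨n, hnN, hn1, ?_⟩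
  intro q hq1 hq2
  have hbpos := bprod_pos hw_pos n q
  have hapos := aprod_pos hw_pos n q
  constructor
  · -- forward products are large
    have hfq : fk q = 1 := by rw [hfk, if_pos ⟨hq1, hq2⟩]
    have hfqn : fk (q + n) = 0 := by rw [hfk, if_neg (by omega)]
    have h1 : ‖(((n : ℂ))⁻¹ • (T ^ n) v) q - 1‖ < ε := by
      have := hcoordA q; rwa [hfq] at this
    have hnormA : 1 - ε ≤ ‖(((n : ℂ))⁻¹ • (T ^ n) v) q‖ := by
      have h2 : ‖(1 : ℂ)‖ - ‖(((n : ℂ))⁻¹ • (T ^ n) v) q‖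
          ≤ ‖(1 : ℂ) - (((n : ℂ))⁻¹ • (T ^ n) v) q‖ := norm_sub_norm_le _ _
      rw [norm_sub_rev] at h2
      rw [norm_one] at h2
      linarith
    have hvqn : ‖v (q + n)‖ ≤ ε := by
      have := hcoordv (q + n); rw [hfqn, sub_zero] at this; linarith
    have hnorm_eq : ‖(((n : ℂ))⁻¹ • (T ^ n) v) q‖ = (n : ℝ)⁻¹ * bprod w n q * ‖v (q + n)‖ := by
      rw [hAcoord q, norm_mul, norm_mul, norm_inv, Complex.norm_natCast, Complex.norm_real,
        Real.norm_eq_abs, abs_of_pos hbpos]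
    have hkey1 : 1 - ε ≤ (n : ℝ)⁻¹ * bprod w n q * ε := by
      refine le_trans hnormA ?_
      rw [hnorm_eq]
      exact mul_le_mul_of_nonneg_left hvqn (by positivity)
    have harith : ((k : ℝ) + 1) * ε = 1 - ε := by
      rw [hεdef]; field_simp
      try ring
    have h5 : ((k : ℝ) + 1) * ε ≤ ((n : ℝ)⁻¹ * bprod w n q) * ε := by
      rw [harith]; exact hkey1.trans (le_of_eq (by ring))
    have h6 : (k : ℝ) + 1 ≤ (n : ℝ)⁻¹ * bprod w n q := le_of_mul_le_mul_right h5 hε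
    rw [div_eq_inv_mul]
    exact h6
  · -- backward products are small
    have hfq : fk q = 1 := by rw [hfk, if_pos ⟨hq1, hq2⟩]
    have hfqn2 : fk (q - n) = 0 := by rw [hfk, if_neg (by omega)]
    have h2 : ‖(((n : ℂ))⁻¹ • (T ^ n) v) (q - n)‖ < ε := by
      have := hcoordA (q - n); rwa [hfqn2, sub_zero] at this
    have heq2 : ‖(((n : ℂ))⁻¹ • (T ^ n) v) (q - n)‖ = (n : ℝ)⁻¹ * aprod w n q * ‖v q‖ := by
      rw [hAcoord (q - n)]
      have hqq : q - (n : ℤ) + n = q := by omega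
      rw [hqq, norm_mul, norm_mul, norm_inv, Complex.norm_natCast, Complex.norm_real,
        Real.norm_eq_abs, ← bprod_sub, abs_of_pos (bprod_pos hw_pos n (q - n))]
    have hvq : 1 - ε ≤ ‖v q‖ := by
      have h3 := hcoordv q
      rw [hfq] at h3
      have h4 : ‖(1 : ℂ)‖ - ‖v q‖ ≤ ‖(1 : ℂ) - v q‖ := norm_sub_norm_le _ _
      rw [norm_sub_rev, norm_one] at h4
      linarith
    have hkey2 : (n : ℝ)⁻¹ * aprod w n q * (1 - ε) ≤ ε := by
      calc (n : ℝ)⁻¹ * aprod w n q * (1 - ε)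
          ≤ (n : ℝ)⁻¹ * aprod w n q * ‖v q‖ :=
            mul_le_mul_of_nonneg_left hvq (by positivity)
        _ = ‖(((n : ℂ))⁻¹ • (T ^ n) v) (q - n)‖ := heq2.symm
        _ ≤ ε := le_of_lt h2
    have harith2 : ε * ((k : ℝ) + 1) = 1 - ε := by
      rw [hεdef]; field_simp
      try ring
    have hne : (n : ℝ) ≠ 0 := ne_of_gt hn0
    have h7 := mul_le_mul_of_nonneg_right hkey2 hn0.le
    have e1 : aprod w n q * (1 - ε) ≤ ε * (n : ℝ) := by
      calc aprod w n q * (1 - ε) = (n : ℝ)⁻¹ * aprod w n q * (1 - ε) * (n : ℝ) := by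
            field_simp
        _ ≤ ε * (n : ℝ) := h7
    have e2 : ε * (aprod w n q * ((k : ℝ) + 1)) ≤ ε * (n : ℝ) := by
      calc ε * (aprod w n q * ((k : ℝ) + 1)) = aprod w n q * (ε * ((k : ℝ) + 1)) := by ring
        _ = aprod w n q * (1 - ε) := by rw [harith2]
        _ ≤ ε * (n : ℝ) := e1
    have e3 := le_of_mul_le_mul_left e2 hε
    rw [div_le_div_iff₀ hn0 (by linarith : (0:ℝ) < (k:ℝ) + 1), one_mul]
    exact e3
end CesaroAux

theorem bilateral_shift_cesaro_hypercyclic_iff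
    (w : ℤ → ℝ) (hw_pos : ∀ n : ℤ, 0 < w n) (hw_bdd : ∃ C : ℝ, ∀ n : ℤ, w n ≤ C)
    (T : L2Z →L[ℂ] L2Z) (hT : IsBilateralWeightedShift T w) :
    CesaroHypercyclic T ↔
      ∃ nk : ℕ → ℕ, StrictMono nk ∧ (∀ k, 0 < nk k) ∧
        ∀ q : ℤ,
          Tendsto (fun k => (∏ i ∈ Finset.Icc (1 : ℤ) (nk k : ℤ), w (i + q)) / (nk k : ℝ))
            atTop atTop ∧
          Tendsto (fun k => (∏ i ∈ Finset.Icc (0 : ℤ) ((nk k : ℤ) - 1), w (q - i)) / (nk k : ℝ))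
            atTop (𝓝 0) := by
  constructor
  · rintro ⟨x₀, hx₀⟩
    choose g hg1 hg2 hg3 using fun (k N : ℕ) => CesaroAux.selection hw_pos hT hx₀ k N
    set nk : ℕ → ℕ := fun k => Nat.rec (g 0 0) (fun k ih => g (k + 1) ih) k with hnk
    have hsucc : ∀ k, nk (k + 1) = g (k + 1) (nk k) := fun k => rfl
    have hmono : StrictMono nk := strictMono_nat_of_lt_succ fun k => by
      rw [hsucc]; exact hg1 (k + 1) (nk k)
    have hprop : ∀ k, 1 ≤ nk k ∧ ∀ q : ℤ, -(k : ℤ) ≤ q → q ≤ (k : ℤ) →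
        ((k : ℝ) + 1 ≤ CesaroAux.bprod w (nk k) q / (nk k) ∧
          CesaroAux.aprod w (nk k) q / (nk k) ≤ 1 / ((k : ℝ) + 1)) := by
      intro k
      cases k with
      | zero => exact ⟨hg2 0 0, hg3 0 0⟩
      | succ k => exact ⟨hg2 (k + 1) (nk k), hg3 (k + 1) (nk k)⟩
    refine ⟨nk, hmono, fun k => (hprop k).1, fun q => ?_⟩
    have hfw : Tendsto (fun k => CesaroAux.bprod w (nk k) q / (nk k : ℝ)) atTop atTop := by
      refine tendsto_atTop_mono' atTop ?_
        (tendsto_atTop_add_const_right atTop (1 : ℝ) tendsto_natCast_atTop_atTop)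
      filter_upwards [eventually_ge_atTop q.natAbs] with k hk
      exact ((hprop k).2 q (by omega) (by omega)).1
    have hbw : Tendsto (fun k => CesaroAux.aprod w (nk k) q / (nk k : ℝ)) atTop (𝓝 0) := by
      refine squeeze_zero' ?_ ?_ tendsto_one_div_add_atTop_nhds_zero_nat
      · filter_upwards [] with k
        have h1 : 0 < CesaroAux.aprod w (nk k) q := CesaroAux.aprod_pos hw_pos _ _
        have h2 : (0 : ℝ) ≤ (nk k : ℝ) := Nat.cast_nonneg _
        positivity
      · filter_upwards [eventually_ge_atTop q.natAbs] with k hk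
        exact ((hprop k).2 q (by omega) (by omega)).2
    exact ⟨hfw, hbw⟩
  · rintro ⟨nk, hmono, hpos, hcond⟩
    exact CesaroAux.sufficiency hw_pos hT nk hpos hcond
end

section
/- Let T be the bilateral weighted shift on ℓ²(ℤ) with weight sequence w_n = 1 for n ≤ 0 and w_n = 2 for n ≥ 1. Then T is Cesàro-hypercyclic. -/
open Filter Topology

/-! ### Auxiliary results -/

lemma heVecnorm (m : ℤ) : ‖eVec m‖ = 1 := by
  have := lp.norm_single (E := fun _ : ℤ => ℂ) (p := 2) (by norm_num) m (1:ℂ)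
  simpa [eVec] using this

lemma L2Z.dense_span : Dense (Submodule.span ℂ (Set.range eVec) : Set L2Z) := by
  intro f
  refine mem_closure_of_tendsto (lp.hasSum_single (by norm_num) f) (Eventually.of_forall ?_)
  intro s
  refine Submodule.sum_mem _ fun i _ => ?_
  have h : lp.single 2 i (f i) = (f i) • eVec i := by
    rw [eVec, ← lp.single_smul, smul_eq_mul, mul_one]
  rw [h]
  exact Submodule.smul_mem _ _ (Submodule.subset_span ⟨i, rfl⟩)

instance : SecondCountableTopology L2Z := by
  have hsep : TopologicalSpace.SeparableSpace L2Z := by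
    rw [← TopologicalSpace.isSeparable_univ_iff]
    have h1 : TopologicalSpace.IsSeparable (Submodule.span ℂ (Set.range eVec) : Set L2Z) :=
      ((Set.countable_range eVec).isSeparable).span
    have h2 := h1.closure
    rwa [L2Z.dense_span.closure_eq] at h2
  exact UniformSpace.secondCountable_of_separable L2Z

/-- Birkhoff-type transitivity theorem for a sequence of continuous maps. -/
lemma exists_dense_orbit {X : Type*} [MetricSpace X] [CompleteSpace X]
    [SecondCountableTopology X] [Nonempty X]
    (f : ℕ → X → X) (hc : ∀ n, Continuous (f n))
    (htrans : ∀ U V : Set X, IsOpen U → IsOpen V → U.Nonempty → V.Nonempty →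
      ∃ n x, 1 ≤ n ∧ x ∈ U ∧ f n x ∈ V) :
    ∃ x : X, Dense {y : X | ∃ n : ℕ, 1 ≤ n ∧ y = f n x} := by
  obtain ⟨b, hbc, hbne, hb⟩ := TopologicalSpace.exists_countable_basis X
  have hgo : ∀ B ∈ b, IsOpen (⋃ n ∈ {m : ℕ | 1 ≤ m}, (f n) ⁻¹' B) := fun B hB =>
    isOpen_biUnion fun n _ => (hb.isOpen hB).preimage (hc n)
  have hgd : ∀ B ∈ b, Dense (⋃ n ∈ {m : ℕ | 1 ≤ m}, (f n) ⁻¹' B) := by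
    intro B hB
    rw [dense_iff_inter_open]
    intro U hU hUne
    obtain ⟨n, x, hn, hxU, hfx⟩ := htrans U B hU (hb.isOpen hB) hUne
      (Set.nonempty_iff_ne_empty.2 fun h => hbne (h ▸ hB))
    exact ⟨x, hxU, Set.mem_biUnion hn hfx⟩
  have hdense : Dense (⋂ B ∈ b, ⋃ n ∈ {m : ℕ | 1 ≤ m}, (f n) ⁻¹' B) :=
    dense_biInter_of_isOpen hgo hbc hgd
  obtain ⟨x, hx⟩ := hdense.nonempty
  refine ⟨x, (hb.dense_iff).2 fun o ho hone => ?_⟩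
  obtain ⟨n, hn, hfn⟩ := Set.mem_iUnion₂.1 (Set.mem_iInter₂.1 hx o ho)
  exact ⟨f n x, hfn, n, hn, rfl⟩

lemma key_bound (n : ℕ) (k : ℤ) :
    (((2:ℝ) ^ (((k + n) ⊔ 0) - (k ⊔ 0)))⁻¹ : ℝ) ≤ (2:ℝ) ^ ((-k) ⊔ 0) * (1/2:ℝ)^n := by
  have h2 : (1/2:ℝ)^n = (2:ℝ) ^ (-(n:ℤ)) := by
    rw [zpow_neg, zpow_natCast, one_div, inv_pow]
  rw [h2, ← zpow_neg, ← zpow_add₀ (by norm_num : (2:ℝ) ≠ 0)]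
  apply zpow_le_zpow_right₀ one_le_two
  omega

theorem example_shift_cesaro_hypercyclic
    (w : ℤ → ℝ) (hw : ∀ n : ℤ, w n = if n ≤ 0 then 1 else 2)
    (T : L2Z →L[ℂ] L2Z) (hT : IsBilateralWeightedShift T w) :
    CesaroHypercyclic T := by
  -- the action of powers of `T` on the basis vectors
  have hpow : ∀ (n : ℕ) (k : ℤ),
      (T ^ n) (eVec k) = ((2:ℂ) ^ ((k ⊔ 0) - ((k - n) ⊔ 0))) • eVec (k - n) := by
    intro n
    induction n with
    | zero =>
      intro k
      simp only [pow_zero, ContinuousLinearMap.one_apply, Nat.cast_zero, sub_zero, sub_self,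
        zpow_zero, one_smul]
    | succ n ih =>
      intro k
      have h1 : (T ^ (n+1)) (eVec k) = (T ^ n) (T (eVec k)) := by
        rw [pow_succ]; rfl
      rw [h1, hT k, map_smul, ih (k-1), smul_smul]
      have hwk : (w k : ℂ) = (2:ℂ) ^ ((k ⊔ 0) - ((k - 1) ⊔ 0)) := by
        rw [hw k]
        rcases le_or_gt k 0 with h | h
        · have he : (k ⊔ 0) - ((k - 1) ⊔ 0) = 0 := by omega
          rw [he, zpow_zero, if_pos h, Complex.ofReal_one]
        · have he : (k ⊔ 0) - ((k - 1) ⊔ 0) = 1 := by omega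
          rw [he, zpow_one, if_neg h.not_ge]; norm_num
      rw [hwk, ← zpow_add₀ (by norm_num : (2:ℂ) ≠ 0)]
      have he2 : (k ⊔ 0) - ((k - 1) ⊔ 0) + (((k-1) ⊔ 0) - ((k - 1 - n) ⊔ 0))
          = (k ⊔ 0) - ((k - (n+1:ℕ)) ⊔ 0) := by push_cast; omega
      have he3 : k - 1 - (n:ℤ) = k - ((n:ℕ)+1:ℕ) := by push_cast; ring
      rw [he2, he3]
  -- topological transitivity of the family `x ↦ n⁻¹ • Tⁿ x`
  have htrans : ∀ U V : Set L2Z, IsOpen U → IsOpen V → U.Nonempty → V.Nonempty →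
      ∃ (n : ℕ) (x : L2Z), 1 ≤ n ∧ x ∈ U ∧ ((n:ℂ))⁻¹ • (T ^ n) x ∈ V := by
    intro U V hU hV hUne hVne
    obtain ⟨u, huspan, huU⟩ := L2Z.dense_span.exists_mem_open hU hUne
    obtain ⟨v, hvspan, hvV⟩ := L2Z.dense_span.exists_mem_open hV hVne
    obtain ⟨M, a, la, hu⟩ := Submodule.mem_span_set'.1 huspan
    obtain ⟨N, c, vc, hv⟩ := Submodule.mem_span_set'.1 hvspan
    choose l hl using fun j => (la j).2
    choose k hk using fun i => (vc i).2
    have hu' : ∑ j, a j • eVec (l j) = u := by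
      rw [← hu]; exact Finset.sum_congr rfl fun j _ => by rw [hl j]
    have hv' : ∑ i, c i • eVec (k i) = v := by
      rw [← hv]; exact Finset.sum_congr rfl fun i _ => by rw [hk i]
    have hs0 : Tendsto (fun n : ℕ => (n:ℝ) * (1/2:ℝ)^n) atTop (𝓝 0) :=
      tendsto_self_mul_const_pow_of_lt_one (by norm_num) (by norm_num)
    set xs : ℕ → L2Z := fun n =>
      u + ∑ i, ((n:ℂ) * c i * ((2:ℂ) ^ (((k i + n) ⊔ 0) - (k i ⊔ 0)))⁻¹) • eVec (k i + n) with hxs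
    have hTx : ∀ n : ℕ, (T ^ n) (xs n) = (T ^ n) u + (n:ℂ) • v := by
      intro n
      rw [hxs]
      simp only [map_add, map_sum, map_smul]
      congr 1
      rw [← hv', Finset.smul_sum]
      refine Finset.sum_congr rfl fun i _ => ?_
      rw [hpow n (k i + n)]
      have h1 : k i + (n:ℤ) - (n:ℤ) = k i := by ring
      rw [h1, smul_smul, mul_assoc,
        inv_mul_cancel₀ (zpow_ne_zero _ (by norm_num : (2:ℂ) ≠ 0)), mul_one, mul_smul]
    have hxu : Tendsto xs atTop (𝓝 u) := by
      rw [tendsto_iff_norm_sub_tendsto_zero]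
      have hlim := hs0.const_mul (∑ i, ‖c i‖ * (2:ℝ) ^ ((-(k i)) ⊔ 0))
      rw [mul_zero] at hlim
      refine squeeze_zero (fun n => norm_nonneg _) ?_ hlim
      intro n
      have hd : xs n - u =
          ∑ i, ((n:ℂ) * c i * ((2:ℂ) ^ (((k i + n) ⊔ 0) - (k i ⊔ 0)))⁻¹) • eVec (k i + n) := by
        rw [hxs]; exact add_sub_cancel_left _ _
      rw [hd, Finset.sum_mul]
      refine (norm_sum_le _ _).trans (Finset.sum_le_sum fun i _ => ?_)
      rw [norm_smul, heVecnorm, mul_one, norm_mul, norm_mul, norm_inv, norm_zpow,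
        Complex.norm_natCast]
      have hkb := key_bound n (k i)
      have h2 : ‖(2:ℂ)‖ = (2:ℝ) := by norm_num
      rw [h2]
      have hcn : (0:ℝ) ≤ (n:ℝ) * ‖c i‖ := by positivity
      nlinarith [mul_le_mul_of_nonneg_left hkb hcn, norm_nonneg (c i),
        pow_nonneg (by norm_num : (0:ℝ) ≤ 1/2) n,
        zpow_nonneg (by norm_num : (0:ℝ) ≤ 2) ((-(k i)) ⊔ 0)]
    have hTu : Tendsto (fun n : ℕ => ((n:ℂ))⁻¹ • (T ^ n) u) atTop (𝓝 0) := by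
      rw [tendsto_zero_iff_norm_tendsto_zero]
      have hlim : Tendsto (fun n : ℕ =>
          (∑ j, ‖a j‖ * (2:ℝ) ^ (l j ⊔ 0)) * (1/(n:ℝ))) atTop (𝓝 0) := by
        have := tendsto_one_div_atTop_nhds_zero_nat.const_mul (∑ j, ‖a j‖ * (2:ℝ) ^ (l j ⊔ 0))
        rwa [mul_zero] at this
      refine squeeze_zero (fun n => norm_nonneg _) ?_ hlim
      intro n
      have hC : ‖(T ^ n) u‖ ≤ ∑ j, ‖a j‖ * (2:ℝ) ^ (l j ⊔ 0) := by
        rw [← hu', map_sum]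
        refine (norm_sum_le _ _).trans (Finset.sum_le_sum fun j _ => ?_)
        rw [map_smul, hpow n (l j), norm_smul, norm_smul, heVecnorm, mul_one, norm_zpow]
        have h2 : ‖(2:ℂ)‖ = (2:ℝ) := by norm_num
        rw [h2]
        exact mul_le_mul_of_nonneg_left (zpow_le_zpow_right₀ one_le_two (by omega)) (norm_nonneg _)
      rw [norm_smul, norm_inv, Complex.norm_natCast, mul_comm _ (1/(n:ℝ)), one_div]
      exact mul_le_mul_of_nonneg_left hC (by positivity)
    have heq : ∀ᶠ n : ℕ in atTop,
        ((n:ℂ))⁻¹ • (T ^ n) u + v = ((n:ℂ))⁻¹ • (T ^ n) (xs n) := by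
      filter_upwards [eventually_ge_atTop 1] with n hn
      rw [hTx n, smul_add, smul_smul,
        inv_mul_cancel₀ (Nat.cast_ne_zero.2 (by omega) : (n:ℂ) ≠ 0), one_smul]
    have hq : Tendsto (fun n : ℕ => ((n:ℂ))⁻¹ • (T ^ n) (xs n)) atTop (𝓝 v) := by
      have h0 := hTu.add_const v
      rw [zero_add] at h0
      exact Tendsto.congr' heq h0
    obtain ⟨n, hn1, hnU, hnV⟩ := ((eventually_ge_atTop 1).and
      ((hxu.eventually_mem (hU.mem_nhds huU)).and (hq.eventually_mem (hV.mem_nhds hvV)))).exists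
    exact ⟨n, xs n, hn1, hnU, hnV⟩
  obtain ⟨x, hx⟩ := exists_dense_orbit (fun n x => ((n:ℂ))⁻¹ • (T ^ n) x)
    (fun n => ((T ^ n).continuous).const_smul ((n:ℂ)⁻¹))
    (fun U V hU hV hUne hVne => by
      obtain ⟨n, x, hn, hxU, hfx⟩ := htrans U V hU hV hUne hVne
      exact ⟨n, x, hn, hxU, hfx⟩)
  exact ⟨x, hx⟩
end

section
/- Let T be the bilateral weighted shift on ℓ²(ℤ) with weight sequence w_n = 2 for n < 0 and w_n = 1/2 for n ≥ 0. Then T is not Cesàro-hypercyclic. -/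
open Filter Topology

/-- Evaluation at a coordinate, as a continuous linear map. -/
noncomputable def evalCLM (m : ℤ) : L2Z →L[ℂ] ℂ :=
  LinearMap.mkContinuous
    { toFun := fun y => y m
      map_add' := fun a b => by simp [lp.coeFn_add]
      map_smul' := fun c a => by simp [lp.coeFn_smul] }
    1 (fun y => by
      rw [one_mul]; exact lp.norm_apply_le_norm (by norm_num : (2 : ENNReal) ≠ 0) y m)

theorem evalCLM_apply (m : ℤ) (y : L2Z) : evalCLM m y = y m := rfl

theorem coord_T (w : ℤ → ℝ) (T : L2Z →L[ℂ] L2Z) (hT : IsBilateralWeightedShift T w)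
    (y : L2Z) (m : ℤ) : (T y) m = (w (m + 1) : ℂ) * y (m + 1) := by
  have hy : HasSum (fun n : ℤ => lp.single 2 n (y n : ℂ)) y :=
    lp.hasSum_single (by norm_num) y
  have h1 : HasSum (fun n : ℤ => evalCLM m (T (lp.single 2 n (y n))))
      (evalCLM m (T y)) := ((evalCLM m).comp T).hasSum hy
  have h2 : HasSum (fun n : ℤ => if n = m + 1 then (w (m + 1) : ℂ) * y (m + 1) else 0)
      ((w (m + 1) : ℂ) * y (m + 1)) := hasSum_ite_eq (m + 1) _
  have hterm : ∀ n : ℤ, evalCLM m (T (lp.single 2 n (y n)))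
      = if n = m + 1 then (w (m + 1) : ℂ) * y (m + 1) else 0 := by
    intro n
    have hs : lp.single 2 n (y n : ℂ) = (y n) • eVec n := by
      rw [eVec, ← lp.single_smul]
      norm_num
    rw [hs, map_smul, map_smul, hT n, evalCLM_apply]
    by_cases h : n = m + 1
    · subst h
      have : (m + 1 - 1 : ℤ) = m := by ring
      rw [this]
      simp [lp.coeFn_smul, eVec, lp.single_apply_self, -Complex.coe_smul]
      ring
    · have hne : m ≠ n - 1 := fun hc => h (by omega)
      simp [lp.coeFn_smul, eVec, lp.single_apply_ne _ _ _ hne, h, -Complex.coe_smul, Pi.single_apply, hne]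
  rw [← evalCLM_apply]
  exact ((h1.congr_fun fun n => (hterm n).symm)).unique h2

theorem coord0_pow (w : ℤ → ℝ) (hw : ∀ n : ℤ, w n = if n < 0 then 2 else 1 / 2)
    (T : L2Z →L[ℂ] L2Z) (hT : IsBilateralWeightedShift T w) (n : ℕ) (y : L2Z) :
    ((T ^ n) y) 0 = ((2 : ℂ) ^ n)⁻¹ * y (n : ℤ) := by
  induction n generalizing y with
  | zero => simp
  | succ k ih =>
    have hpow : (T ^ (k + 1)) y = (T ^ k) (T y) := by
      rw [pow_succ]; rfl
    rw [hpow, ih (T y), coord_T w T hT y]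
    have hwk : w ((k : ℤ) + 1) = 1 / 2 := by
      rw [hw]; rw [if_neg (by omega)]
    rw [hwk]
    push_cast
    ring_nf

theorem example_shift_not_cesaro_hypercyclic
    (w : ℤ → ℝ) (hw : ∀ n : ℤ, w n = if n < 0 then 2 else 1 / 2)
    (T : L2Z →L[ℂ] L2Z) (hT : IsBilateralWeightedShift T w) :
    ¬ CesaroHypercyclic T := by
  rintro ⟨x, hx⟩
  set z : L2Z := ((‖x‖ + 1 : ℝ) : ℂ) • eVec 0 with hz
  obtain ⟨y, hyball, hyS⟩ := (Metric.dense_iff.mp hx z (1/2) (by norm_num))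
  have hdist : dist z y < 1/2 := by rw [dist_comm]; exact Metric.mem_ball.mp hyball
  obtain ⟨n, hn1, rfl⟩ := hyS
  -- value of the orbit point at coordinate 0
  have hcoord : (((n : ℂ))⁻¹ • (T ^ n) x) 0 = (n : ℂ)⁻¹ * (((2 : ℂ) ^ n)⁻¹ * x (n : ℤ)) := by
    rw [lp.coeFn_smul, Pi.smul_apply, coord0_pow w hw T hT n x, smul_eq_mul]
  -- bound on the orbit value
  have hxn : ‖x (n : ℤ)‖ ≤ ‖x‖ := lp.norm_apply_le_norm (by norm_num) x (n : ℤ)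
  have hninv : ‖((n : ℂ))⁻¹‖ ≤ 1 := by
    rw [norm_inv, Complex.norm_natCast]
    rw [inv_le_one_iff₀]
    right
    exact_mod_cast hn1
  have hpinv : ‖((2 : ℂ) ^ n)⁻¹‖ ≤ 1 / 2 := by
    rw [norm_inv, norm_pow, Complex.norm_ofNat]
    rw [inv_le_comm₀ (by positivity) (by norm_num)]
    calc (1/2 : ℝ)⁻¹ = 2 ^ 1 := by norm_num
    _ ≤ 2 ^ n := by
      apply pow_le_pow_right₀ (by norm_num) hn1
  have hbound : ‖(((n : ℂ))⁻¹ • (T ^ n) x) 0‖ ≤ (1/2) * ‖x‖ := by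
    rw [hcoord, norm_mul, norm_mul]
    calc ‖((n:ℂ))⁻¹‖ * (‖((2:ℂ)^n)⁻¹‖ * ‖x (n:ℤ)‖)
        ≤ 1 * ((1/2) * ‖x‖) := by
          apply mul_le_mul hninv (mul_le_mul hpinv hxn (norm_nonneg _) (by norm_num))
            (by positivity) (by norm_num)
      _ = (1/2) * ‖x‖ := by ring
  -- value of z at coordinate 0
  have hz0 : z 0 = ((‖x‖ + 1 : ℝ) : ℂ) := by
    rw [hz, lp.coeFn_smul, Pi.smul_apply, eVec, lp.single_apply_self, smul_eq_mul, mul_one]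
  -- coordinatewise estimate from the distance bound
  have hkey : ‖z 0 - (((n : ℂ))⁻¹ • (T ^ n) x) 0‖ < 1/2 := by
    have h1 : ‖z 0 - (((n : ℂ))⁻¹ • (T ^ n) x) 0‖
        ≤ ‖z - ((n : ℂ))⁻¹ • (T ^ n) x‖ := by
      have := lp.norm_apply_le_norm (by norm_num : (2 : ENNReal) ≠ 0)
        (z - ((n : ℂ))⁻¹ • (T ^ n) x) 0
      rwa [lp.coeFn_sub, Pi.sub_apply] at this
    calc ‖z 0 - (((n : ℂ))⁻¹ • (T ^ n) x) 0‖ ≤ ‖z - ((n : ℂ))⁻¹ • (T ^ n) x‖ := h1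
      _ = dist z (((n : ℂ))⁻¹ • (T ^ n) x) := (dist_eq_norm _ _).symm
      _ < 1/2 := hdist
  have h3 : (‖x‖ + 1 : ℝ) ≤ ‖z 0 - (((n : ℂ))⁻¹ • (T ^ n) x) 0‖
      + ‖(((n : ℂ))⁻¹ • (T ^ n) x) 0‖ := by
    have := norm_sub_norm_le (z 0) ((((n : ℂ))⁻¹ • (T ^ n) x) 0)
    have hz0n : ‖z 0‖ = ‖x‖ + 1 := by
      rw [hz0, Complex.norm_real, Real.norm_eq_abs, abs_of_nonneg (by positivity)]
    linarith [norm_sub_norm_le (z 0) ((((n : ℂ))⁻¹ • (T ^ n) x) 0), hz0n ▸ this]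
  have hx0 : (0:ℝ) ≤ ‖x‖ := norm_nonneg x
  linarith
end
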